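/- Let G be a finitely generated abelian group, H a subgroup of G, and Q an element of G. Then either there exists a positive integer k with k·Q ∈ H, or there exists a positive integer n such that for all integers m ≥ n and all h ∈ H, the element h − Q does not lie in m·G = {m·g : g ∈ G}. -/

import Mathlib

/-- Let `G` be a finitely generated abelian group, `H` a subgroup and `Q ∈ G`. Either
some positive multiple of `Q` lies in `H`, or there is a positive integer `n` such that
for all integers `m ≥ n` and all `h ∈ H`, the element `h - Q` is not an `m`-th multiple. -/
theorem stmt2 {G : Type*} [AddCommGroup G] [AddGroup.FG G]
    (H : AddSubgroup G) (Q : G) :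
    (∃ k : ℕ, 0 < k ∧ (k : ℤ) • Q ∈ H) ∨
    (∃ n : ℤ, 0 < n ∧ ∀ m : ℤ, n ≤ m → ∀ h ∈ H, ¬ ∃ g : G, h - Q = m • g) := by
  classical
  have : Module.Finite ℤ G := Module.Finite.iff_addGroup_fg.mpr ⟨AddGroup.FG.out⟩
  set H' : Submodule ℤ G := AddSubgroup.toIntSubmodule H with hH'
  set K := G ⧸ H'
  set T := Submodule.torsion ℤ K
  set L := K ⧸ T
  let π : G →ₗ[ℤ] L := (T.mkQ).comp H'.mkQ
  by_cases hq : π Q = 0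
  · left
    have hmem : H'.mkQ Q ∈ T := by
      have h2 := hq
      simp only [π, LinearMap.comp_apply, Submodule.mkQ_apply] at h2
      exact (Submodule.Quotient.mk_eq_zero T).mp h2
    obtain ⟨⟨a, ha⟩, hax⟩ := hmem
    rw [mem_nonZeroDivisors_iff_ne_zero] at ha
    have hax' : a • H'.mkQ Q = 0 := hax
    refine ⟨a.natAbs, Int.natAbs_pos.mpr ha, ?_⟩
    have hz : (a.natAbs : ℤ) • (H'.mkQ Q) = 0 := by
      rcases Int.natAbs_eq a with h | h
      · rw [← h]; exact hax'
      · rw [h, neg_smul, neg_eq_zero] at hax'; exact hax'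
    rw [← map_zsmul, Submodule.mkQ_apply, Submodule.Quotient.mk_eq_zero] at hz
    exact hz
  · right
    have : Module.IsTorsionFree ℤ L := Submodule.QuotientTorsion.instIsTorsionFree
    have : Module.Free ℤ L := Module.free_of_finite_type_torsion_free'
    let b := Module.Free.chooseBasis ℤ L
    have hrepr : b.repr (π Q) ≠ 0 := fun h => hq (b.repr.map_eq_zero_iff.mp h)
    obtain ⟨i, hi⟩ := Finsupp.ne_iff.mp hrepr
    rw [Finsupp.coe_zero, Pi.zero_apply] at hi
    let f : G →ₗ[ℤ] ℤ := (b.coord i).comp π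
    have hfQ : f Q ≠ 0 := hi
    have hfH : ∀ h ∈ H, f h = 0 := by
      intro h hh
      have : H'.mkQ h = 0 := (Submodule.Quotient.mk_eq_zero H').mpr hh
      simp [f, π, LinearMap.comp_apply, this]
    refine ⟨|f Q| + 1, by positivity, ?_⟩
    intro m hm h hh ⟨g, hg⟩
    have := congrArg f hg
    rw [map_sub, map_zsmul, hfH h hh, zero_sub, smul_eq_mul] at this
    have hdvd : m ∣ f Q := ⟨-(f g), by rw [mul_neg]; linarith⟩
    have : m ≤ |f Q| := Int.le_of_dvd (abs_pos.mpr hfQ) ((dvd_abs m (f Q)).mpr hdvd)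
    linarith
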